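/- arXiv:2301.11740 — 3 statements merged into one kernel-verified Lean document; each statement's English description precedes it below -/
import Mathlib

section
/- Let 𝔸 = (A, ≤, →, Σ) be an implicative algebra with |A| < κ for a strongly inaccessible cardinal κ, and let W, ∈_W, =_W be as defined below. Then there exists ρ ∈ Σ such that ρ ≤ ⨅_{α∈W} (α =_W α). -/
universe u


/-- An implicative algebra `𝔸 = (A, ≤, →, Σ)`:  a complete lattice `(A, ≤)` together with an
implication `imp` which is antitone in its first argument, monotone in its second argument and
turns infima in the second argument into infima, and a separator `Sig ⊆ A` which is upward
closed, closed under modus ponens and contains the combinators `K` and `S`. -/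
structure ImplicativeAlgebra (A : Type u) [CompleteLattice A] where
  imp : A → A → A
  imp_antitone : ∀ ⦃a a' b : A⦄, a ≤ a' → imp a' b ≤ imp a b
  imp_monotone : ∀ ⦃a b b' : A⦄, b ≤ b' → imp a b ≤ imp a b'
  imp_sInf : ∀ (a : A) (S : Set A), imp a (sInf S) = ⨅ b ∈ S, imp a b
  Sig : Set A
  Sig_upward : ∀ ⦃a b : A⦄, a ∈ Sig → a ≤ b → b ∈ Sig
  Sig_mp : ∀ ⦃a b : A⦄, imp a b ∈ Sig → a ∈ Sig → b ∈ Sig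
  Sig_K : (⨅ a : A, ⨅ b : A, imp a (imp b a)) ∈ Sig
  Sig_S : (⨅ a : A, ⨅ b : A, ⨅ c : A,
      imp (imp a (imp b c)) (imp (imp a b) (imp a c))) ∈ Sig

namespace ImplicativeAlgebra

variable {A : Type u} [CompleteLattice A]

/-- `a × b := ⨅ x, ((a → (b → x)) → x)`. -/
def times (IA : ImplicativeAlgebra A) (a b : A) : A :=
  ⨅ x : A, IA.imp (IA.imp a (IA.imp b x)) x

/-- `a + b := ⨅ x, ((a → x) → ((b → x) → x))`. -/
def plus (IA : ImplicativeAlgebra A) (a b : A) : A :=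
  ⨅ x : A, IA.imp (IA.imp a x) (IA.imp (IA.imp b x) x)

/-- `∃⃗_{i} f i := ⨅ x, ((⨅ i, (f i → x)) → x)`.  (`∀⃗` is just `⨅`.) -/
def aex (IA : ImplicativeAlgebra A) {ι : Sort*} (f : ι → A) : A :=
  ⨅ x : A, IA.imp (⨅ i, IA.imp (f i) x) x

/-- `φ ⊢_{Σ[I]} ψ` iff `⨅ i, (φ i → ψ i) ∈ Σ`. -/
def SigLe (IA : ImplicativeAlgebra A) {ι : Sort*} (f g : ι → A) : Prop :=
  (⨅ i, IA.imp (f i) (g i)) ∈ IA.Sig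

/-- `φ ≡_{Σ[I]} ψ` iff `φ ⊢_{Σ[I]} ψ` and `ψ ⊢_{Σ[I]} φ`. -/
def SigEquiv (IA : ImplicativeAlgebra A) {ι : Sort*} (f g : ι → A) : Prop :=
  IA.SigLe f g ∧ IA.SigLe g f

end ImplicativeAlgebra

/-- Pre-elements of the cumulative hierarchy of partial functions valued in `A`:
an element is an `A`-labelled family of previously constructed elements, i.e. a partial
function (presented by a family indexed by its domain) from earlier elements to `A`. -/
inductive PreW (A : Type u) : Type (u + 1)
  | mk (ι : Type u) (fam : ι → PreW A) (val : ι → A)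

namespace PreW

variable {A : Type u}

/-- The (index type of the) domain of a partial function. -/
def dom : PreW A → Type u
  | ⟨ι, _, _⟩ => ι

/-- The family of elements of the domain. -/
def fam : (w : PreW A) → w.dom → PreW A
  | ⟨_, f, _⟩ => f

/-- The values in `A` of the partial function. -/
def val : (w : PreW A) → w.dom → A
  | ⟨_, _, v⟩ => v

/-- `w` is hereditarily of size `< κ`:  this carves out exactly the elements of the stage
`W_κ` of the hierarchy (for `κ` inaccessible). -/
def HSmall (κ : Cardinal.{u}) : PreW A → Prop
  | ⟨ι, f, _⟩ => Cardinal.mk ι < κ ∧ ∀ i, HSmall κ (f i)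

theorem HSmall.fam {κ : Cardinal.{u}} :
    ∀ {w : PreW A}, w.HSmall κ → ∀ i : w.dom, (w.fam i).HSmall κ
  | ⟨_, _, _⟩, h, i => h.2 i

/-- The rank of an element of the hierarchy. -/
noncomputable def rank : PreW A → Ordinal.{u}
  | ⟨_, f, _⟩ => ⨆ i, Order.succ (rank (f i))

theorem rank_lt_mk {ι : Type u} (f : ι → PreW A) (v : ι → A) (i : ι) :
    (f i).rank < (PreW.mk ι f v).rank := by
  have h : Order.succ (f i).rank ≤ ⨆ j, Order.succ (f j).rank := Ordinal.le_iSup _ i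
  have : (f i).rank < ⨆ j, Order.succ (f j).rank :=
    lt_of_lt_of_le (Order.lt_succ _) h
  simpa [rank] using this

end PreW

namespace ImplicativeAlgebra

variable {A : Type u} [CompleteLattice A]

/-- `α =_W β`, defined by recursion on rank:
`α =_W β := (α ⊆_W β) × (β ⊆_W α)` where
`α ⊆_W β := ∀⃗_{t ∈ dom α} (α t → (fam α t ∈_W β))` and
`γ ∈_W β := ∃⃗_{s ∈ dom β} (β s × (fam β s =_W γ))`. -/
noncomputable def eqW (IA : ImplicativeAlgebra A) : PreW A → PreW A → A
  | ⟨ι₁, f₁, v₁⟩, ⟨ι₂, f₂, v₂⟩ =>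
    IA.times
      (⨅ t : ι₁, IA.imp (v₁ t)
        (IA.aex fun s : ι₂ => IA.times (v₂ s) (IA.eqW (f₂ s) (f₁ t))))
      (⨅ t : ι₂, IA.imp (v₂ t)
        (IA.aex fun s : ι₁ => IA.times (v₁ s) (IA.eqW (f₁ s) (f₂ t))))
termination_by α β => max α.rank β.rank
decreasing_by
  · exact max_lt (lt_max_of_lt_right (PreW.rank_lt_mk f₂ v₂ s))
      (lt_max_of_lt_left (PreW.rank_lt_mk f₁ v₁ t))
  · exact max_lt (lt_max_of_lt_left (PreW.rank_lt_mk f₁ v₁ s))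
      (lt_max_of_lt_right (PreW.rank_lt_mk f₂ v₂ t))

/-- `α ∈_W β := ∃⃗_{s ∈ dom β} (β s × (fam β s =_W α))`. -/
noncomputable def memW (IA : ImplicativeAlgebra A) (α β : PreW A) : A :=
  IA.aex fun s : β.dom => IA.times (β.val s) (IA.eqW (β.fam s) α)

/-- `α ⊆_W β := ∀⃗_{t ∈ dom α} (α t → (fam α t ∈_W β))`. -/
noncomputable def subW (IA : ImplicativeAlgebra A) (α β : PreW A) : A :=
  ⨅ t : α.dom, IA.imp (α.val t) (IA.memW (α.fam t) β)

end ImplicativeAlgebra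

/-- The stage `W = W_κ` of the hierarchy: all hereditarily `< κ`-sized elements. -/
def WSet (A : Type u) (κ : Cardinal.{u}) : Type (u + 1) :=
  {w : PreW A // w.HSmall κ}

/-- An element of the domain of `w ∈ W`, as an element of `W`. -/
def WSet.fam {A : Type u} {κ : Cardinal.{u}} (w : WSet A κ) (i : w.1.dom) : WSet A κ :=
  ⟨w.1.fam i, w.2.fam i⟩

/-- Formulas (in context of length `n`) of the first-order language of set theory, with
(de Bruijn-style) variables `Fin n`, binary predicates `∈` and `=`, connectives `⊥`, `∧`, `∨`,
`→` and quantifiers `∃`, `∀` (binding the last variable of the enlarged context). -/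
inductive SetFormula : ℕ → Type
  | bot {n : ℕ} : SetFormula n
  | mem {n : ℕ} (i j : Fin n) : SetFormula n
  | eq {n : ℕ} (i j : Fin n) : SetFormula n
  | and {n : ℕ} (φ ψ : SetFormula n) : SetFormula n
  | or {n : ℕ} (φ ψ : SetFormula n) : SetFormula n
  | imp {n : ℕ} (φ ψ : SetFormula n) : SetFormula n
  | ex {n : ℕ} (φ : SetFormula (n + 1)) : SetFormula n
  | all {n : ℕ} (φ : SetFormula (n + 1)) : SetFormula n

namespace SetFormula

/-- Renaming of variables (since the only terms of the language of set theory are variables,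
substitution is a special case). -/
def rename : {n m : ℕ} → (Fin n → Fin m) → SetFormula n → SetFormula m
  | _, _, _, .bot => .bot
  | _, _, f, .mem i j => .mem (f i) (f j)
  | _, _, f, .eq i j => .eq (f i) (f j)
  | _, _, f, .and φ ψ => .and (φ.rename f) (ψ.rename f)
  | _, _, f, .or φ ψ => .or (φ.rename f) (ψ.rename f)
  | _, _, f, .imp φ ψ => .imp (φ.rename f) (ψ.rename f)
  | _, _, f, .ex φ => .ex (φ.rename (Fin.snoc (Fin.castSucc ∘ f) (Fin.last _)))
  | _, _, f, .all φ => .all (φ.rename (Fin.snoc (Fin.castSucc ∘ f) (Fin.last _)))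

/-- Universal closure `∀x₁ … ∀xₙ φ` of a formula in context of length `n`. -/
def allClose : {n : ℕ} → SetFormula n → SetFormula 0
  | 0, φ => φ
  | _ + 1, φ => allClose (.all φ)

end SetFormula

namespace ImplicativeAlgebra

variable {A : Type u} [CompleteLattice A]

/-- The interpretation `‖φ[x₁,…,xₙ]‖ : Wⁿ → A` of a formula in context, by recursion on the
structure of `φ`:  atomic formulas are interpreted by `∈_W` and `=_W`, `∧` by `×`, `∨` by `+`,
`→` by `→`, `∃` by `∃⃗` over `W` and `∀` by `∀⃗` (i.e. `⨅`) over `W`. -/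
noncomputable def interp (IA : ImplicativeAlgebra A) (κ : Cardinal.{u}) :
    {n : ℕ} → SetFormula n → (Fin n → WSet A κ) → A
  | _, .bot, _ => ⊥
  | _, .mem i j, v => IA.memW (v i).1 (v j).1
  | _, .eq i j, v => IA.eqW (v i).1 (v j).1
  | _, .and φ ψ, v => IA.times (IA.interp κ φ v) (IA.interp κ ψ v)
  | _, .or φ ψ, v => IA.plus (IA.interp κ φ v) (IA.interp κ ψ v)
  | _, .imp φ ψ, v => IA.imp (IA.interp κ φ v) (IA.interp κ ψ v)
  | _, .ex φ, v => IA.aex fun β : WSet A κ => IA.interp κ φ (Fin.snoc v β)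
  | _, .all φ, v => ⨅ β : WSet A κ, IA.interp κ φ (Fin.snoc v β)

end ImplicativeAlgebra

namespace Stmt0Aux

open ImplicativeAlgebra

variable {A : Type u} [CompleteLattice A] (IA : ImplicativeAlgebra A)

/-- Application in an implicative algebra. -/
noncomputable def ap (a b : A) : A := sInf {c | a ≤ IA.imp b c}

variable {IA}

theorem ap_le {a b c : A} (h : a ≤ IA.imp b c) : ap IA a b ≤ c := sInf_le h

theorem le_imp_ap (a b : A) : a ≤ IA.imp b (ap IA a b) := by
  rw [ap, IA.imp_sInf]
  exact le_iInf₂ fun c hc => hc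

theorem le_imp_of_ap_le {a b c : A} (h : ap IA a b ≤ c) : a ≤ IA.imp b c :=
  (le_imp_ap a b).trans (IA.imp_monotone h)

theorem ap_mono {a a' b b' : A} (ha : a ≤ a') (hb : b ≤ b') :
    ap IA a b ≤ ap IA a' b' :=
  ap_le (ha.trans ((le_imp_ap a' b').trans (IA.imp_antitone hb)))

theorem Sig_ap {a b : A} (ha : a ∈ IA.Sig) (hb : b ∈ IA.Sig) : ap IA a b ∈ IA.Sig :=
  IA.Sig_mp (IA.Sig_upward ha (le_imp_ap a b)) hb

variable (IA)

noncomputable def KK : A := ⨅ a : A, ⨅ b : A, IA.imp a (IA.imp b a)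

noncomputable def SS : A := ⨅ a : A, ⨅ b : A, ⨅ c : A,
    IA.imp (IA.imp a (IA.imp b c)) (IA.imp (IA.imp a b) (IA.imp a c))

variable {IA}

theorem KK_le (a b : A) : KK IA ≤ IA.imp a (IA.imp b a) :=
  (iInf_le _ a).trans (iInf_le _ b)

theorem SS_le (a b c : A) : SS IA ≤
    IA.imp (IA.imp a (IA.imp b c)) (IA.imp (IA.imp a b) (IA.imp a c)) :=
  ((iInf_le _ a).trans (iInf_le _ b)).trans (iInf_le _ c)

theorem KK_mem : KK IA ∈ IA.Sig := IA.Sig_K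
theorem SS_mem : SS IA ∈ IA.Sig := IA.Sig_S

variable (IA)

noncomputable def Ielem : A := ap IA (ap IA (SS IA) (KK IA)) (KK IA)

variable {IA}

theorem Ielem_mem : Ielem IA ∈ IA.Sig := Sig_ap (Sig_ap SS_mem KK_mem) KK_mem

theorem Ielem_le (a : A) : Ielem IA ≤ IA.imp a a := by
  have h1 : SS IA ≤ IA.imp (KK IA)
      (IA.imp (IA.imp a (IA.imp a a)) (IA.imp a a)) :=
    (SS_le a (IA.imp a a) a).trans (IA.imp_antitone (KK_le a (IA.imp a a)))
  have h2 : ap IA (SS IA) (KK IA) ≤ IA.imp (KK IA) (IA.imp a a) :=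
    (ap_le h1).trans (IA.imp_antitone (KK_le a a))
  exact ap_le h2

theorem ap_KK_le (b a : A) : ap IA (ap IA (KK IA) b) a ≤ b :=
  ap_le (ap_le (KK_le b a))

/-- Combinatory terms with constants from `A`. -/
inductive Tm (A : Type u) : ℕ → Type u
  | var {n} : Fin n → Tm A n
  | const {n} : A → Tm A n
  | app {n} : Tm A n → Tm A n → Tm A n

variable (IA)

noncomputable def evalTm : ∀ {n}, Tm A n → (Fin n → A) → A
  | _, .var i, v => v i
  | _, .const c, _ => c
  | _, .app t u, v => ap IA (evalTm t v) (evalTm u v)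

/-- Bracket abstraction of the last variable. -/
noncomputable def absTm : ∀ {n}, Tm A (n + 1) → Tm A n
  | n, .var i =>
      if h : (i : ℕ) < n then .app (.const (KK IA)) (.var ⟨i, h⟩)
      else .const (Ielem IA)
  | _, .const c => .app (.const (KK IA)) (.const c)
  | _, .app t u => .app (.app (.const (SS IA)) (absTm t)) (absTm u)

variable {IA}

theorem beta : ∀ {n} (t : Tm A (n + 1)) (v : Fin n → A) (a : A),
    ap IA (evalTm IA (absTm IA t) v) a ≤ evalTm IA t (Fin.snoc v a) := by
  intro n t
  induction t with
  | var i =>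
    intro v a
    by_cases h : (i : ℕ) < n
    · have hi : i = Fin.castSucc ⟨i, h⟩ := by ext; rfl
      rw [absTm]
      simp only [h, dif_pos, evalTm]
      have hs : (Fin.snoc v a : Fin (n+1) → A) i = v ⟨i, h⟩ := by
        simp only [Fin.snoc, h, dif_pos, cast_eq]
        rfl
      rw [hs]
      exact ap_KK_le _ _
    · have hi : i = Fin.last n := by
        ext
        exact Nat.le_antisymm (Nat.lt_succ_iff.mp i.isLt) (Nat.not_lt.mp h)
      rw [absTm]
      simp only [h, dif_neg, not_false_iff, evalTm]
      rw [hi, Fin.snoc_last]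
      exact ap_le (Ielem_le a)
  | const c =>
    intro v a
    rw [absTm]
    simp only [evalTm]
    exact ap_KK_le _ _
  | app t u iht ihu =>
    intro v a
    rw [absTm]
    simp only [evalTm]
    set T := evalTm IA (absTm IA t) v with hT
    set U := evalTm IA (absTm IA u) v with hU
    set t' := evalTm IA t (Fin.snoc v a) with ht'
    set u' := evalTm IA u (Fin.snoc v a) with hu'
    have h1 : T ≤ IA.imp a (IA.imp (ap IA U a) (ap IA t' u')) :=
      le_imp_of_ap_le ((iht v a).trans
        ((le_imp_ap t' u').trans (IA.imp_antitone (ihu v a))))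
    have h2 : SS IA ≤ IA.imp T (IA.imp (IA.imp a (ap IA U a)) (IA.imp a (ap IA t' u'))) :=
      (SS_le a (ap IA U a) (ap IA t' u')).trans (IA.imp_antitone h1)
    have h3 : ap IA (SS IA) T ≤ IA.imp U (IA.imp a (ap IA t' u')) :=
      (ap_le h2).trans (IA.imp_antitone (le_imp_ap U a))
    have h4 : ap IA (ap IA (SS IA) T) U ≤ IA.imp a (ap IA t' u') := ap_le h3
    exact ap_le h4

/-- Terms all of whose constants lie in the separator. -/
def GoodTm (IA : ImplicativeAlgebra A) : ∀ {n}, Tm A n → Prop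
  | _, .var _ => True
  | _, .const c => c ∈ IA.Sig
  | _, .app t u => GoodTm IA t ∧ GoodTm IA u

theorem GoodTm.abs : ∀ {n} {t : Tm A (n + 1)}, GoodTm IA t → GoodTm IA (absTm IA t) := by
  intro n t
  induction t with
  | var i =>
    intro _
    rw [absTm]
    by_cases h : (i : ℕ) < n
    · simp only [h, dif_pos, GoodTm]; exact ⟨KK_mem, trivial⟩
    · simp only [h, dif_neg, not_false_iff, GoodTm]; exact Ielem_mem
  | const c =>
    intro hc
    rw [absTm]
    simp only [GoodTm] at hc ⊢
    exact ⟨KK_mem, hc⟩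
  | app t u iht ihu =>
    intro h
    rw [absTm]
    simp only [GoodTm] at h ⊢
    exact ⟨⟨SS_mem, iht h.1⟩, ihu h.2⟩

theorem evalTm_mem : ∀ {n} {t : Tm A n} (_ : GoodTm IA t) {v : Fin n → A}
    (_ : ∀ i, v i ∈ IA.Sig), evalTm IA t v ∈ IA.Sig := by
  intro n t
  induction t with
  | var i => intro _ v hv; rw [evalTm]; exact hv i
  | const c => intro hc v _; rw [evalTm]; simp only [GoodTm] at hc; exact hc
  | app t u iht ihu =>
    intro h v hv
    simp only [GoodTm] at h
    rw [evalTm]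
    exact Sig_ap (iht h.1 hv) (ihu h.2 hv)

/-! ### Concrete combinators: `E = fun m k => k m`, `P = fun a b k => k a b`,
`G = fun r a => E (P a r)`, `F = fun r => P (G r) (G r)`, `om = fun x => F (x x)`,
and the fixed point `rho = om om`. -/

variable (IA)

def v0 : Fin 0 → A := fun i => i.elim0

noncomputable def eTm : Tm A 0 :=
  absTm IA (absTm IA (.app (.var 1) (.var 0)))

noncomputable def Eel : A := evalTm IA (eTm IA) (v0)

noncomputable def pTm : Tm A 0 :=
  absTm IA (absTm IA (absTm IA (.app (.app (.var 2) (.var 0)) (.var 1))))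

noncomputable def Pel : A := evalTm IA (pTm IA) (v0)

noncomputable def gTm : Tm A 0 :=
  absTm IA (absTm IA
    (.app (.const (Eel IA)) (.app (.app (.const (Pel IA)) (.var 1)) (.var 0))))

noncomputable def Gel : A := evalTm IA (gTm IA) (v0)

noncomputable def fTm : Tm A 0 :=
  absTm IA (.app (.app (.const (Pel IA)) (.app (.const (Gel IA)) (.var 0)))
    (.app (.const (Gel IA)) (.var 0)))

noncomputable def Fel : A := evalTm IA (fTm IA) (v0)

noncomputable def wTm : Tm A 0 :=
  absTm IA (.app (.const (Fel IA)) (.app (.var 0) (.var 0)))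

noncomputable def omel : A := evalTm IA (wTm IA) (v0)

noncomputable def rhoel : A := ap IA (omel IA) (omel IA)

variable {IA}

theorem v0_mem : ∀ i : Fin 0, v0 i ∈ IA.Sig := fun i => i.elim0

theorem Eel_mem : Eel IA ∈ IA.Sig := by
  refine evalTm_mem (GoodTm.abs (GoodTm.abs ?_)) v0_mem
  simp only [GoodTm]
  exact ⟨trivial, trivial⟩

theorem Pel_mem : Pel IA ∈ IA.Sig := by
  refine evalTm_mem (GoodTm.abs (GoodTm.abs (GoodTm.abs ?_))) v0_mem
  simp only [GoodTm]
  exact ⟨⟨trivial, trivial⟩, trivial⟩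

theorem Gel_mem : Gel IA ∈ IA.Sig := by
  refine evalTm_mem (GoodTm.abs (GoodTm.abs ?_)) v0_mem
  simp only [GoodTm]
  exact ⟨Eel_mem, ⟨Pel_mem, trivial⟩, trivial⟩

theorem Fel_mem : Fel IA ∈ IA.Sig := by
  refine evalTm_mem (GoodTm.abs ?_) v0_mem
  simp only [GoodTm]
  exact ⟨⟨Pel_mem, Gel_mem, trivial⟩, Gel_mem, trivial⟩

theorem omel_mem : omel IA ∈ IA.Sig := by
  refine evalTm_mem (GoodTm.abs ?_) v0_mem
  simp only [GoodTm]
  exact ⟨Fel_mem, trivial, trivial⟩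

theorem rhoel_mem : rhoel IA ∈ IA.Sig := Sig_ap omel_mem omel_mem

theorem Eel_beta (m k : A) : ap IA (ap IA (Eel IA) m) k ≤ ap IA k m := by
  have h1 := beta (IA := IA) (absTm IA (.app (.var 1) (.var 0))) (v0) m
  have h2 := beta (IA := IA) ((.app (.var 1) (.var 0)) : Tm A 2)
    (Fin.snoc (v0) m) k
  refine ((ap_mono h1 le_rfl).trans h2).trans ?_
  simp [evalTm, Fin.snoc]

theorem Pel_beta (a b k : A) : ap IA (ap IA (ap IA (Pel IA) a) b) k ≤ ap IA (ap IA k a) b := by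
  have h1 := beta (IA := IA)
    (absTm IA (absTm IA (.app (.app (.var 2) (.var 0)) (.var 1)))) (v0) a
  have h2 := beta (IA := IA)
    (absTm IA (.app (.app (.var 2) (.var 0)) (.var 1))) (Fin.snoc (v0) a) b
  have h3 := beta (IA := IA) ((.app (.app (.var 2) (.var 0)) (.var 1)) : Tm A 3)
    (Fin.snoc (Fin.snoc (v0) a) b) k
  refine ((ap_mono (ap_mono h1 le_rfl) le_rfl).trans
    ((ap_mono h2 le_rfl).trans h3)).trans ?_
  simp [evalTm, Fin.snoc]

theorem Gel_beta (r a : A) :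
    ap IA (ap IA (Gel IA) r) a ≤ ap IA (Eel IA) (ap IA (ap IA (Pel IA) a) r) := by
  have h1 := beta (IA := IA)
    (absTm IA (.app (.const (Eel IA)) (.app (.app (.const (Pel IA)) (.var 1)) (.var 0))))
    (v0) r
  have h2 := beta (IA := IA)
    ((.app (.const (Eel IA)) (.app (.app (.const (Pel IA)) (.var 1)) (.var 0))) : Tm A 2)
    (Fin.snoc (v0) r) a
  refine ((ap_mono h1 le_rfl).trans h2).trans ?_
  simp [evalTm, Fin.snoc]

theorem Fel_beta (r : A) :
    ap IA (Fel IA) r ≤ ap IA (ap IA (Pel IA) (ap IA (Gel IA) r)) (ap IA (Gel IA) r) := by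
  have h1 := beta (IA := IA)
    ((.app (.app (.const (Pel IA)) (.app (.const (Gel IA)) (.var 0)))
      (.app (.const (Gel IA)) (.var 0))) : Tm A 1) (v0) r
  refine h1.trans ?_
  simp [evalTm, Fin.snoc]

theorem rhoel_beta : rhoel IA ≤ ap IA (Fel IA) (rhoel IA) := by
  have h1 := beta (IA := IA)
    ((.app (.const (Fel IA)) (.app (.var 0) (.var 0))) : Tm A 1) (v0) (omel IA)
  refine h1.trans ?_
  simp [evalTm, Fin.snoc, rhoel]

theorem Eel_le_aex {ι : Sort*} (g : ι → A) (t : ι) {m : A} (hm : m ≤ g t) :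
    ap IA (Eel IA) m ≤ IA.aex g := by
  refine le_iInf fun x => le_imp_of_ap_le ?_
  refine (Eel_beta m _).trans (ap_le ?_)
  exact (iInf_le _ t).trans (IA.imp_antitone hm)

theorem Pel_le_times {a a' b b' : A} (ha : a ≤ a') (hb : b ≤ b') :
    ap IA (ap IA (Pel IA) a) b ≤ IA.times a' b' := by
  refine le_iInf fun x => le_imp_of_ap_le ?_
  refine (Pel_beta a b _).trans ?_
  exact ap_le ((ap_le (IA.imp_antitone ha)).trans (IA.imp_antitone hb))

theorem rho_le_eqW (α : PreW A) : rhoel IA ≤ IA.eqW α α := by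
  induction α with
  | mk ι f v ih =>
    rw [ImplicativeAlgebra.eqW]
    have hG : ap IA (Gel IA) (rhoel IA) ≤
        ⨅ t : ι, IA.imp (v t)
          (IA.aex fun s : ι => IA.times (v s) (IA.eqW (f s) (f t))) := by
      refine le_iInf fun t => le_imp_of_ap_le ?_
      refine (Gel_beta (rhoel IA) (v t)).trans ?_
      exact Eel_le_aex (fun s => IA.times (v s) (IA.eqW (f s) (f t))) t
        (Pel_le_times le_rfl (ih t))
    exact rhoel_beta.trans ((Fel_beta (rhoel IA)).trans (Pel_le_times hG hG))

end Stmt0Aux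
theorem stmt0 {A : Type u} [CompleteLattice A] (IA : ImplicativeAlgebra A)
    (κ : Cardinal.{u}) (hκ : κ.IsInaccessible) (hA : Cardinal.mk A < κ) :
    ∃ ρ ∈ IA.Sig, ρ ≤ ⨅ α : WSet A κ, IA.eqW α.1 α.1 :=
  ⟨Stmt0Aux.rhoel IA, Stmt0Aux.rhoel_mem,
    le_iInf fun α => Stmt0Aux.rho_le_eqW α.1⟩
end

section
/- Let 𝔸 = (A, ≤, →, Σ) be an implicative algebra with |A| < κ for a strongly inaccessible cardinal κ, and let W, ∈_W, =_W be as defined below. Then there exists σ ∈ Σ such that σ ≤ ⨅_{α,β∈W} ((α =_W β) → (β =_W α)). -/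
universe u

namespace ImplicativeAlgebra

variable {A : Type u} [CompleteLattice A] (IA : ImplicativeAlgebra A)

/-- Application in the implicative algebra. -/
def app (a b : A) : A := sInf {c | a ≤ IA.imp b c}

lemma le_imp_app (a b : A) : a ≤ IA.imp b (IA.app a b) := by
  rw [app, IA.imp_sInf]
  exact le_iInf fun c => le_iInf fun hc => hc

lemma app_le {a b c : A} (h : a ≤ IA.imp b c) : IA.app a b ≤ c := sInf_le h

lemma app_mono {a a' b b' : A} (ha : a ≤ a') (hb : b ≤ b') :
    IA.app a b ≤ IA.app a' b' :=
  IA.app_le (ha.trans ((IA.le_imp_app a' b').trans (IA.imp_antitone hb)))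

lemma app_mem {a b : A} (ha : a ∈ IA.Sig) (hb : b ∈ IA.Sig) : IA.app a b ∈ IA.Sig :=
  IA.Sig_mp (IA.Sig_upward ha (IA.le_imp_app a b)) hb

/-- The `K` combinator. -/
def cK : A := ⨅ a : A, ⨅ b : A, IA.imp a (IA.imp b a)

/-- The `S` combinator. -/
def cS : A := ⨅ a : A, ⨅ b : A, ⨅ c : A,
    IA.imp (IA.imp a (IA.imp b c)) (IA.imp (IA.imp a b) (IA.imp a c))

lemma cK_mem : IA.cK ∈ IA.Sig := IA.Sig_K
lemma cS_mem : IA.cS ∈ IA.Sig := IA.Sig_S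

lemma cK_le (a b : A) : IA.cK ≤ IA.imp a (IA.imp b a) :=
  (iInf_le _ a).trans (iInf_le _ b)

lemma cS_le (a b c : A) :
    IA.cS ≤ IA.imp (IA.imp a (IA.imp b c)) (IA.imp (IA.imp a b) (IA.imp a c)) :=
  ((iInf_le _ a).trans (iInf_le _ b)).trans (iInf_le _ c)

lemma cK_red (a b : A) : IA.app (IA.app IA.cK a) b ≤ a :=
  IA.app_le (IA.app_le (IA.cK_le a b))

lemma cS_red (a b c : A) :
    IA.app (IA.app (IA.app IA.cS a) b) c ≤ IA.app (IA.app a c) (IA.app b c) := by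
  set Y := IA.app b c
  set Z := IA.app (IA.app a c) (IA.app b c)
  have ha : a ≤ IA.imp c (IA.imp Y Z) :=
    (IA.le_imp_app a c).trans (IA.imp_monotone (IA.le_imp_app _ _))
  have h1 : IA.app IA.cS a ≤ IA.imp (IA.imp c Y) (IA.imp c Z) :=
    IA.app_le ((IA.cS_le c Y Z).trans (IA.imp_antitone ha))
  have h2 : IA.app (IA.app IA.cS a) b ≤ IA.imp c Z :=
    IA.app_le (h1.trans (IA.imp_antitone (IA.le_imp_app b c)))
  exact IA.app_le h2

/-- The `B` combinator `λ f g x, f (g x)`. -/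
def cB : A := IA.app (IA.app IA.cS (IA.app IA.cK IA.cS)) IA.cK

lemma cB_mem : IA.cB ∈ IA.Sig :=
  IA.app_mem (IA.app_mem IA.cS_mem (IA.app_mem IA.cK_mem IA.cS_mem)) IA.cK_mem

lemma cB_red (f g x : A) :
    IA.app (IA.app (IA.app IA.cB f) g) x ≤ IA.app f (IA.app g x) := by
  have h1 : IA.app IA.cB f ≤ IA.app IA.cS (IA.app IA.cK f) :=
    (IA.cS_red _ _ f).trans (IA.app_mono (IA.cK_red _ _) le_rfl)
  have h2 : IA.app (IA.app (IA.app IA.cB f) g) x ≤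
      IA.app (IA.app (IA.app IA.cS (IA.app IA.cK f)) g) x :=
    IA.app_mono (IA.app_mono h1 le_rfl) le_rfl
  exact h2.trans ((IA.cS_red _ _ _).trans (IA.app_mono (IA.cK_red _ _) le_rfl))

/-- The `C` combinator `λ f a b, f b a`. -/
def cC : A := IA.app (IA.app IA.cS (IA.app (IA.app IA.cB IA.cB) IA.cS)) (IA.app IA.cK IA.cK)

lemma cC_mem : IA.cC ∈ IA.Sig :=
  IA.app_mem (IA.app_mem IA.cS_mem (IA.app_mem (IA.app_mem IA.cB_mem IA.cB_mem) IA.cS_mem))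
    (IA.app_mem IA.cK_mem IA.cK_mem)

lemma cC_red (f a b : A) :
    IA.app (IA.app (IA.app IA.cC f) a) b ≤ IA.app (IA.app f b) a := by
  have h1 : IA.app IA.cC f ≤ IA.app (IA.app IA.cB (IA.app IA.cS f)) IA.cK :=
    (IA.cS_red _ _ f).trans (IA.app_mono (IA.cB_red _ _ f) (IA.cK_red _ _))
  have h2 : IA.app (IA.app IA.cC f) a ≤ IA.app (IA.app IA.cS f) (IA.app IA.cK a) :=
    (IA.app_mono h1 le_rfl).trans (IA.cB_red _ _ a)
  have h3 : IA.app (IA.app (IA.app IA.cC f) a) b ≤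
      IA.app (IA.app f b) (IA.app (IA.app IA.cK a) b) :=
    (IA.app_mono h2 le_rfl).trans (IA.cS_red _ _ _)
  exact h3.trans (IA.app_mono le_rfl (IA.cK_red a b))

/-- The swap combinator `λ p k, p (λ a b, k b a)`, i.e. `λ p, S (K p) C`. -/
def cT : A := IA.app (IA.app IA.cS (IA.app (IA.app IA.cS (IA.app IA.cK IA.cS)) IA.cK))
    (IA.app IA.cK IA.cC)

lemma cT_mem : IA.cT ∈ IA.Sig :=
  IA.app_mem (IA.app_mem IA.cS_mem (IA.app_mem (IA.app_mem IA.cS_mem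
    (IA.app_mem IA.cK_mem IA.cS_mem)) IA.cK_mem)) (IA.app_mem IA.cK_mem IA.cC_mem)

lemma cT_red (p k : A) : IA.app (IA.app IA.cT p) k ≤ IA.app p (IA.app IA.cC k) := by
  have h1 : IA.app IA.cT p ≤ IA.app (IA.app IA.cS (IA.app IA.cK p)) IA.cC := by
    refine (IA.cS_red _ _ p).trans (IA.app_mono ?_ (IA.cK_red _ _))
    exact (IA.cS_red _ _ p).trans (IA.app_mono (IA.cK_red _ _) le_rfl)
  exact (IA.app_mono h1 le_rfl).trans ((IA.cS_red _ _ k).trans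
    (IA.app_mono (IA.cK_red p k) le_rfl))

lemma cT_le_times (x y : A) : IA.app IA.cT (IA.times x y) ≤ IA.times y x := by
  refine le_iInf fun w => ?_
  set k := IA.imp y (IA.imp x w) with hk
  -- C k ≤ x → (y → w)
  have hCk : IA.app IA.cC k ≤ IA.imp x (IA.imp y w) := by
    have hred : IA.app (IA.app (IA.app IA.cC k) x) y ≤ w :=
      (IA.cC_red k x y).trans (IA.app_le (IA.app_le le_rfl))
    exact (IA.le_imp_app _ x).trans (IA.imp_monotone
      ((IA.le_imp_app _ y).trans (IA.imp_monotone hred)))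
  have hp : IA.times x y ≤ IA.imp (IA.app IA.cC k) w :=
    (iInf_le _ w).trans (IA.imp_antitone hCk)
  have : IA.app (IA.app IA.cT (IA.times x y)) k ≤ w :=
    (IA.cT_red _ k).trans (IA.app_le hp)
  exact (IA.le_imp_app _ k).trans (IA.imp_monotone this)

lemma eqW_swap (α β : PreW A) :
    ∃ x y : A, IA.eqW α β = IA.times x y ∧ IA.eqW β α = IA.times y x := by
  obtain ⟨ι₁, f₁, v₁⟩ := α
  obtain ⟨ι₂, f₂, v₂⟩ := β
  exact ⟨_, _, by rw [eqW], by rw [eqW]⟩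

end ImplicativeAlgebra

theorem stmt2 {A : Type u} [CompleteLattice A] (IA : ImplicativeAlgebra A)
    (κ : Cardinal.{u}) (hκ : κ.IsInaccessible) (hA : Cardinal.mk A < κ) :
    ∃ σ ∈ IA.Sig, σ ≤ ⨅ α : WSet A κ, ⨅ β : WSet A κ,
      IA.imp (IA.eqW α.1 β.1) (IA.eqW β.1 α.1) := by
  refine ⟨IA.cT, IA.cT_mem, le_iInf fun α => le_iInf fun β => ?_⟩
  obtain ⟨x, y, h1, h2⟩ := IA.eqW_swap α.1 β.1
  rw [h1, h2]
  exact (IA.le_imp_app IA.cT (IA.times x y)).trans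
    (IA.imp_monotone (IA.cT_le_times x y))
end

section
/- Let 𝔸 = (A, ≤, →, Σ) be an implicative algebra with |A| < κ for a strongly inaccessible cardinal κ, and let W, ∈_W, =_W be as defined below. Then there exists s₃ ∈ Σ such that s₃ ≤ ⨅_{α,β,γ∈W} (((α =_W β) × (γ =_W α)) → (γ =_W β)). -/
universe u

local infixl:65 " ♯ " => max

namespace ImplicativeAlgebra



variable {A : Type u} [CompleteLattice A] (IA : ImplicativeAlgebra A)

/-- Application in an implicative algebra. -/
def ap (a b : A) : A := sInf {c | a ≤ IA.imp b c}

theorem ap_le {a b c : A} (h : a ≤ IA.imp b c) : IA.ap a b ≤ c := sInf_le h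

theorem le_imp_ap (a b : A) : a ≤ IA.imp b (IA.ap a b) := by
  rw [ap, IA.imp_sInf]
  exact le_iInf fun c => le_iInf fun hc => hc

theorem ap_mono {a a' b b' : A} (ha : a ≤ a') (hb : b ≤ b') : IA.ap a b ≤ IA.ap a' b' :=
  IA.ap_le (ha.trans ((IA.le_imp_ap a' b').trans (IA.imp_antitone hb)))

theorem ap_mem {a b : A} (ha : a ∈ IA.Sig) (hb : b ∈ IA.Sig) : IA.ap a b ∈ IA.Sig :=
  IA.Sig_mp (IA.Sig_upward ha (IA.le_imp_ap a b)) hb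

/-- The K combinator. -/
def kA : A := ⨅ a : A, ⨅ b : A, IA.imp a (IA.imp b a)

/-- The S combinator. -/
def sA : A := ⨅ a : A, ⨅ b : A, ⨅ c : A,
  IA.imp (IA.imp a (IA.imp b c)) (IA.imp (IA.imp a b) (IA.imp a c))

theorem kA_mem : IA.kA ∈ IA.Sig := IA.Sig_K

theorem sA_mem : IA.sA ∈ IA.Sig := IA.Sig_S

theorem top_mem : (⊤ : A) ∈ IA.Sig := IA.Sig_upward IA.Sig_K le_top

theorem kA_spec (a b : A) : IA.ap (IA.ap IA.kA a) b ≤ a := by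
  have h : IA.kA ≤ IA.imp a (IA.imp b a) := (iInf_le _ a).trans (iInf_le _ b)
  exact IA.ap_le (IA.ap_le h)

theorem sA_spec (f g a : A) :
    IA.ap (IA.ap (IA.ap IA.sA f) g) a ≤ IA.ap (IA.ap f a) (IA.ap g a) := by
  set q := IA.ap g a with hq
  set r := IA.ap (IA.ap f a) q with hr
  have hf : f ≤ IA.imp a (IA.imp q r) :=
    (IA.le_imp_ap f a).trans (IA.imp_monotone (IA.le_imp_ap _ q))
  have hg : g ≤ IA.imp a q := IA.le_imp_ap g a
  have hs : IA.sA ≤ IA.imp (IA.imp a (IA.imp q r)) (IA.imp (IA.imp a q) (IA.imp a r)) :=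
    ((iInf_le _ a).trans ((iInf_le _ q).trans (iInf_le _ r)))
  have h1 : IA.ap IA.sA f ≤ IA.imp (IA.imp a q) (IA.imp a r) :=
    IA.ap_le (hs.trans (IA.imp_antitone hf))
  have h2 : IA.ap (IA.ap IA.sA f) g ≤ IA.imp a r :=
    IA.ap_le (h1.trans (IA.imp_antitone hg))
  exact IA.ap_le h2

end ImplicativeAlgebra

/-- Untyped λ-terms with constants from `A` (de Bruijn indices). -/
inductive Tm (A : Type u) : Type u
  | var : ℕ → Tm A
  | cst : A → Tm A
  | app : Tm A → Tm A → Tm A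
  | lam : Tm A → Tm A

namespace ImplicativeAlgebra

variable {A : Type u} [CompleteLattice A] (IA : ImplicativeAlgebra A)

/-- Push a value onto an environment. -/
def push (e : ℕ → A) (a : A) (n : ℕ) : A := if n = 0 then a else e (n - 1)

/-- Evaluation of λ-terms, with `lam` interpreted as `⨅ a, a → ⟦body⟧(a::env)`. -/
def ev : Tm A → (ℕ → A) → A
  | .var n, e => e n
  | .cst a, _ => a
  | .app t u, e => IA.ap (ev t e) (ev u e)
  | .lam t, e => ⨅ a : A, IA.imp a (ev t (push e a))

/-- λ-free terms. -/
def lamFree : Tm A → Prop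
  | .var _ => True
  | .cst _ => True
  | .app t u => lamFree t ∧ lamFree u
  | .lam _ => False

/-- Terms all of whose constants are in the separator. -/
def good : Tm A → Prop
  | .var _ => True
  | .cst a => a ∈ IA.Sig
  | .app t u => good t ∧ good u
  | .lam t => good t

/-- Bracket abstraction (of variable `0`) on λ-free terms. -/
def absT : Tm A → Tm A
  | .var 0 => .app (.app (.cst IA.sA) (.cst IA.kA)) (.cst IA.kA)
  | .var (n + 1) => .app (.cst IA.kA) (.var n)
  | .cst a => .app (.cst IA.kA) (.cst a)
  | .app t u => .app (.app (.cst IA.sA) (absT t)) (absT u)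
  | .lam _ => .cst IA.kA

/-- Compilation of λ-terms to combinatory (λ-free) terms. -/
def compile : Tm A → Tm A
  | .app t u => .app (compile t) (compile u)
  | .lam t => absT IA (compile t)
  | t => t

theorem absT_lamFree (t : Tm A) : lamFree (absT IA t) := by
  induction t with
  | var n => cases n <;> simp [absT, lamFree]
  | cst a => simp [absT, lamFree]
  | app t u iht ihu => simp [absT, lamFree, iht, ihu]
  | lam t iht => simp [absT, lamFree]

theorem compile_lamFree (t : Tm A) : lamFree (compile IA t) := by
  induction t with
  | var n => simp [compile, lamFree]
  | cst a => simp [compile, lamFree]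
  | app t u iht ihu => exact ⟨iht, ihu⟩
  | lam t iht => exact absT_lamFree IA _

theorem absT_good (t : Tm A) (h : good IA t) : good IA (absT IA t) := by
  induction t with
  | var n => cases n <;> simp [absT, good, IA.kA_mem, IA.sA_mem]
  | cst a => exact ⟨IA.kA_mem, h⟩
  | app t u iht ihu => exact ⟨⟨IA.sA_mem, iht h.1⟩, ihu h.2⟩
  | lam t iht => exact IA.kA_mem

theorem compile_good (t : Tm A) (h : good IA t) : good IA (compile IA t) := by
  induction t with
  | var n => trivial
  | cst a => exact h
  | app t u iht ihu => exact ⟨iht h.1, ihu h.2⟩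
  | lam t iht => exact absT_good IA _ (iht h)

theorem absT_spec : ∀ t : Tm A, lamFree t → ∀ (e : ℕ → A) (a : A),
    IA.ap (IA.ev (absT IA t) e) a ≤ IA.ev t (push e a)
  | .var 0, _, e, a => by
      simpa [absT, ev, push] using (IA.sA_spec IA.kA IA.kA a).trans (IA.kA_spec a _)
  | .var (n + 1), _, e, a => by simpa [absT, ev, push] using IA.kA_spec (e n) a
  | .cst c, _, e, a => by simpa [absT, ev, push] using IA.kA_spec c a
  | .app t u, h, e, a => by
      have := (IA.sA_spec (IA.ev (absT IA t) e) (IA.ev (absT IA u) e) a).trans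
        (IA.ap_mono (absT_spec t h.1 e a) (absT_spec u h.2 e a))
      simpa [absT, ev] using this
  | .lam _, h, _, _ => absurd h not_false

theorem compile_le : ∀ (t : Tm A) (e : ℕ → A), IA.ev (compile IA t) e ≤ IA.ev t e
  | .var _, _ => le_rfl
  | .cst _, _ => le_rfl
  | .app t u, e => IA.ap_mono (compile_le t e) (compile_le u e)
  | .lam t, e => by
      refine le_iInf fun a => ?_
      refine (IA.le_imp_ap _ a).trans (IA.imp_monotone ?_)
      exact (absT_spec IA _ (compile_lamFree IA t) e a).trans (compile_le t _)

theorem lamFree_good_mem : ∀ t : Tm A, lamFree t → good IA t →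
    ∀ e : ℕ → A, (∀ n, e n ∈ IA.Sig) → IA.ev t e ∈ IA.Sig
  | .var n, _, _, e, he => he n
  | .cst _, _, hg, _, _ => hg
  | .app t u, hl, hg, e, he =>
      IA.ap_mem (lamFree_good_mem t hl.1 hg.1 e he) (lamFree_good_mem u hl.2 hg.2 e he)
  | .lam _, hl, _, _, _ => absurd hl not_false

end ImplicativeAlgebra
set_option linter.unnecessarySeqFocus false
set_option linter.unreachableTactic false
set_option linter.unusedVariables false
set_option linter.globalAttributeIn false
set_option linter.unusedTactic false

namespace ImplicativeAlgebra

variable {A : Type u} [CompleteLattice A] (IA : ImplicativeAlgebra A)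

theorem ev_lam_le_imp {t : Tm A} {e : ℕ → A} {a b : A}
    (h : IA.ev t (push e a) ≤ b) : IA.ev (.lam t) e ≤ IA.imp a b :=
  (iInf_le _ a).trans (IA.imp_monotone h)

theorem inf_imp_le_imp {F : A → A} {a b : A} (h : F a ≤ b) :
    (⨅ x : A, IA.imp x (F x)) ≤ IA.imp a b :=
  (iInf_le _ a).trans (IA.imp_monotone h)

theorem times_elim {a b x w c : A} (hc : c ≤ IA.times a b)
    (hw : w ≤ IA.imp a (IA.imp b x)) : IA.ap c w ≤ x :=
  IA.ap_le (hc.trans ((iInf_le _ x).trans (IA.imp_antitone hw)))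

theorem aex_elim {ι : Sort*} {F : ι → A} {x w c : A} (hc : c ≤ IA.aex F)
    (hw : w ≤ ⨅ i, IA.imp (F i) x) : IA.ap c w ≤ x :=
  IA.ap_le (hc.trans ((iInf_le _ x).trans (IA.imp_antitone hw)))

theorem le_times {a b : A} {F G : A → A} (hF : ∀ h, F h ≤ a) (hG : ∀ h, G h ≤ b) :
    (⨅ h : A, IA.imp h (IA.ap (IA.ap h (F h)) (G h))) ≤ IA.times a b := by
  refine le_iInf fun x => IA.inf_imp_le_imp ?_
  refine IA.ap_le ((IA.ap_le ?_).trans (IA.imp_antitone (hG _)))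
  exact IA.imp_antitone (hF _)

theorem le_aex {ι : Sort*} {F : ι → A} (i : ι) {G : A → A} (hG : ∀ g, G g ≤ F i) :
    (⨅ g : A, IA.imp g (IA.ap g (G g))) ≤ IA.aex F := by
  refine le_iInf fun x => IA.inf_imp_le_imp ?_
  exact IA.ap_le ((iInf_le _ i).trans (IA.imp_antitone (hG _)))

theorem eqW_def (α β : PreW A) :
    IA.eqW α β = IA.times (IA.subW α β) (IA.subW β α) := by
  cases α with
  | mk ι₁ f₁ v₁ =>
    cases β with
    | mk ι₂ f₂ v₂ =>
      rw [ImplicativeAlgebra.eqW]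
      rfl

/-- The transitivity statement. -/
noncomputable def Tr (x y z : PreW A) : A :=
  IA.imp (IA.times (IA.eqW x y) (IA.eqW z x)) (IA.eqW z y)

end ImplicativeAlgebra

namespace StmtAux

open ImplicativeAlgebra

def Pt (A : Type u) : Tm A := .lam (.app (.app (.var 0) (.var 6)) (.var 3))
def Wt (A : Type u) : Tm A := .lam (.app (.app (.var 0) (.var 3)) (.app (.var 11) (Pt A)))
def K2a (A : Type u) : Tm A := .lam (.lam (.lam (.app (.var 0) (Wt A))))
def K2t (A : Type u) : Tm A := .lam (.app (.var 0) (K2a A))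
def K1a (A : Type u) : Tm A := .lam (.lam (.app (.app (.var 4) (.var 1)) (K2t A)))
def K1t (A : Type u) : Tm A := .lam (.app (.var 0) (K1a A))

/-- Core realizer: `λ ih u v c. u c (λq'. q' (λa e. v a (λq''. q'' (λb e' g.
g (λh'. h' b (ih (λh''. h'' e e')))))))`. -/
@[irreducible] def RRt (A : Type u) : Tm A :=
  .lam (.lam (.lam (.lam (.app (.app (.var 2) (.var 0)) (K1t A)))))

variable {A : Type u} [CompleteLattice A] (IA : ImplicativeAlgebra A)

theorem RRt_spec (X Y Z : PreW A) (ih : A) (e : ℕ → A)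
    (H : ∀ (s : X.dom) (t : Y.dom) (u : Z.dom),
      ih ≤ IA.Tr (X.fam s) (Y.fam t) (Z.fam u)) :
    IA.ev (RRt A) e ≤
      IA.imp ih (IA.imp (IA.subW Y X) (IA.imp (IA.subW X Z) (IA.subW Y Z))) := by
  rw [RRt]
  refine IA.ev_lam_le_imp (IA.ev_lam_le_imp (IA.ev_lam_le_imp ?_))
  show IA.ev _ _ ≤ ⨅ t : Y.dom, IA.imp (Y.val t) (IA.memW (Y.fam t) Z)
  refine le_iInf fun t => IA.ev_lam_le_imp ?_
  simp only [ev, push, Pt, Wt, K2a, K2t, K1a, K1t]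
  refine IA.aex_elim (IA.ap_le (iInf_le _ t)) ?_
  refine le_iInf fun s => IA.inf_imp_le_imp ?_
  refine IA.times_elim le_rfl ?_
  refine IA.inf_imp_le_imp ?_
  refine IA.inf_imp_le_imp ?_
  refine IA.aex_elim (IA.ap_le (iInf_le _ s)) ?_
  refine le_iInf fun u => IA.inf_imp_le_imp ?_
  refine IA.times_elim le_rfl ?_
  refine IA.inf_imp_le_imp ?_
  refine IA.inf_imp_le_imp ?_
  refine IA.le_aex u fun g => ?_
  refine IA.le_times (fun _ => le_rfl) fun h' => ?_
  refine IA.ap_le (((H s t u).trans (le_of_eq (ImplicativeAlgebra.Tr.eq_1 IA _ _ _))).trans (IA.imp_antitone ?_))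
  exact IA.le_times (fun _ => le_rfl) (fun _ => le_rfl)

end StmtAux
namespace StmtAux

open ImplicativeAlgebra

def T1t (A : Type u) : Tm A := .app (.app (.app (RRt A) (.var 8)) (.var 2)) (.var 4)
def T2t (A : Type u) : Tm A := .app (.app (.app (RRt A) (.var 8)) (.var 3)) (.var 1)

/-- The induction step realizer. -/
def STEPt (A : Type u) : Tm A :=
  .lam (.lam (.app (.var 0) (.lam (.lam (.app (.var 1) (.lam (.lam (.app (.var 2)
    (.lam (.lam (.lam (.app (.app (.var 0) (T1t A)) (T2t A)))))))))))))

def Mt (A : Type u) : Tm A := .lam (.app (.var 1) (.app (.var 0) (.var 0)))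
def Yt (A : Type u) : Tm A := .lam (.app (Mt A) (Mt A))
def REALt (A : Type u) : Tm A := .app (Yt A) (STEPt A)

variable {A : Type u} [CompleteLattice A] (IA : ImplicativeAlgebra A)

theorem ap_ev_lam_le {t : Tm A} {e : ℕ → A} (a : A) :
    IA.ap (IA.ev (.lam t) e) a ≤ IA.ev t (push e a) :=
  IA.ap_le (iInf_le _ a)

theorem stept_spec (α β γ : PreW A) (ih : A)
    (H1 : ∀ (s : α.dom) (t : γ.dom) (u : β.dom),
      ih ≤ IA.Tr (α.fam s) (γ.fam t) (β.fam u))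
    (H2 : ∀ (s : α.dom) (t : β.dom) (u : γ.dom),
      ih ≤ IA.Tr (α.fam s) (β.fam t) (γ.fam u))
    (e : ℕ → A) :
    IA.ev (STEPt A) e ≤ IA.imp ih (IA.Tr α β γ) := by
  rw [STEPt, ImplicativeAlgebra.Tr]
  refine IA.ev_lam_le_imp (IA.ev_lam_le_imp ?_)
  simp only [ev, push, T1t, T2t]
  norm_num
  refine IA.times_elim le_rfl ?_
  refine IA.inf_imp_le_imp ?_
  refine IA.inf_imp_le_imp ?_
  rw [IA.eqW_def α β]
  refine IA.times_elim le_rfl ?_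
  refine IA.inf_imp_le_imp ?_
  refine IA.inf_imp_le_imp ?_
  rw [IA.eqW_def γ α]
  refine IA.times_elim le_rfl ?_
  refine IA.inf_imp_le_imp ?_
  refine IA.inf_imp_le_imp ?_
  rw [IA.eqW_def γ β]
  refine IA.le_times (fun h => ?_) (fun h => ?_)
  · refine IA.ap_le (IA.ap_le (IA.ap_le ?_))
    exact RRt_spec IA α γ β ih _ H1
  · refine IA.ap_le (IA.ap_le (IA.ap_le ?_))
    exact RRt_spec IA α β γ ih _ H2

theorem fam_rank_lt (w : PreW A) (i : w.dom) : (w.fam i).rank < w.rank := by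
  cases w with
  | mk ι f v => exact PreW.rank_lt_mk f v i

end StmtAux
theorem stmt5 {A : Type u} [CompleteLattice A] (IA : ImplicativeAlgebra A)
    (κ : Cardinal.{u}) (hκ : κ.IsInaccessible) (hA : Cardinal.mk A < κ) :
    ∃ s₃ ∈ IA.Sig, s₃ ≤ ⨅ α : WSet A κ, ⨅ β : WSet A κ, ⨅ γ : WSet A κ,
      IA.imp (IA.times (IA.eqW α.1 β.1) (IA.eqW γ.1 α.1)) (IA.eqW γ.1 β.1) := by
  classical
  set eT : ℕ → A := fun _ => (⊤ : A) with heT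
  set fv : A := IA.ev (StmtAux.STEPt A) eT with hfv
  set m : A := IA.ev (StmtAux.Mt A) (ImplicativeAlgebra.push eT fv) with hm
  set z : A := IA.ap m m with hz
  -- the fixed point inequality `z ≤ fv ⬝ z`
  have hfix : z ≤ IA.ap fv z := by
    have h1 := StmtAux.ap_ev_lam_le IA
      (t := Tm.app (.var 1) (.app (.var 0) (.var 0)))
      (e := ImplicativeAlgebra.push eT fv) m
    exact h1
  -- main induction on ranks
  have main : ∀ o : Ordinal, ∀ α β γ : WSet A κ,
      α.1.rank ♯ β.1.rank ♯ γ.1.rank < o → z ≤ IA.Tr α.1 β.1 γ.1 := by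
    intro o
    induction o using Ordinal.induction with
    | h o IH =>
      intro α β γ ho
      have H1 : ∀ (s : α.1.dom) (t : γ.1.dom) (u : β.1.dom),
          z ≤ IA.Tr (α.1.fam s) (γ.1.fam t) (β.1.fam u) := by
        intro s t u
        have hlt : (α.1.fam s).rank ♯ (γ.1.fam t).rank ♯ (β.1.fam u).rank <
            α.1.rank ♯ β.1.rank ♯ γ.1.rank := by
          have h := max_lt_max
            (max_lt_max (StmtAux.fam_rank_lt α.1 s) (StmtAux.fam_rank_lt γ.1 t))
            (StmtAux.fam_rank_lt β.1 u)
          calc (α.1.fam s).rank ♯ (γ.1.fam t).rank ♯ (β.1.fam u).rank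
              < α.1.rank ♯ γ.1.rank ♯ β.1.rank := h
            _ = α.1.rank ♯ β.1.rank ♯ γ.1.rank := by
                exact max_right_comm _ _ _
        exact IH _ ho (α.fam s) (γ.fam t) (β.fam u) hlt
      have H2 : ∀ (s : α.1.dom) (t : β.1.dom) (u : γ.1.dom),
          z ≤ IA.Tr (α.1.fam s) (β.1.fam t) (γ.1.fam u) := by
        intro s t u
        have hlt : (α.1.fam s).rank ♯ (β.1.fam t).rank ♯ (γ.1.fam u).rank <
            α.1.rank ♯ β.1.rank ♯ γ.1.rank :=
          max_lt_max
            (max_lt_max (StmtAux.fam_rank_lt α.1 s) (StmtAux.fam_rank_lt β.1 t))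
            (StmtAux.fam_rank_lt γ.1 u)
        exact IH _ ho (α.fam s) (β.fam t) (γ.fam u) hlt
      exact hfix.trans (IA.ap_le (StmtAux.stept_spec IA α.1 β.1 γ.1 z H1 H2 eT))
  refine ⟨IA.ev (ImplicativeAlgebra.compile IA (StmtAux.REALt A)) eT, ?_, ?_⟩
  · refine ImplicativeAlgebra.lamFree_good_mem IA _ (ImplicativeAlgebra.compile_lamFree IA _)
      (ImplicativeAlgebra.compile_good IA _ ?_) eT (fun _ => IA.top_mem)
    unfold StmtAux.REALt StmtAux.Yt StmtAux.Mt StmtAux.STEPt StmtAux.T1t StmtAux.T2t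
      StmtAux.RRt StmtAux.K1t StmtAux.K1a StmtAux.K2t StmtAux.K2a StmtAux.Wt StmtAux.Pt
    simp [ImplicativeAlgebra.good]
  · refine (ImplicativeAlgebra.compile_le IA _ eT).trans ?_
    have h0 : IA.ev (StmtAux.REALt A) eT ≤ z := by
      have h1 := StmtAux.ap_ev_lam_le IA (t := Tm.app (StmtAux.Mt A) (StmtAux.Mt A)) (e := eT) fv
      simpa [StmtAux.REALt, StmtAux.Yt, ImplicativeAlgebra.ev, ← hm, ← hfv] using h1
    refine h0.trans ?_
    refine le_iInf fun α => le_iInf fun β => le_iInf fun γ => ?_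
    exact main _ α β γ (Order.lt_succ _)
end
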